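/- Fix a factor index k, a real 1×p matrix L, and symmetric matrices D₁,…,D_r at which V := I_n + ∑_{k=1}^r ∑_{j=1}^{l_k} Z_{(k,j)}·D_k·Z_{(k,j)}ᵀ is positive definite and Xᵀ·V⁻¹·X is invertible. Consider the function S² : ℝ^{q_k(q_k+1)/2} → ℝ obtained by evaluating v ↦ σ²·L·(Xᵀ·V⁻¹·X)⁻¹·Lᵀ with D_k replaced by the unique symmetric matrix whose half-vectorization is v, all other quantities held fixed. Then S² is differentiable at v = vech(D_k) and its gradient there equals σ²·𝒟_{q_k}ᵀ·( ∑_{j=1}^{l_k} B_{(k,j)} ⊗ B_{(k,j)} ), where B_{(k,j)} := Z_{(k,j)}ᵀ·V⁻¹·X·(Xᵀ·V⁻¹·X)⁻¹·Lᵀ is a q_k×1 column vector and ⊗ denotes the Kronecker product. -/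

import Mathlib

open Matrix MeasureTheory ProbabilityTheory

/-- Column-major vectorization of a matrix: the entry of `vec A` at index `(j, i)`
(column `j`, row `i`) is `A i j`. -/
def vec {α β R : Type*} (A : Matrix α β R) : β × α → R := fun p => A p.2 p.1

/-- Index type for the half-vectorization of a `q × q` matrix: pairs `(j, i)`
(column `j`, row `i`) lying on or below the diagonal, i.e. with `j ≤ i`. -/
abbrev VechIdx (q : ℕ) := { p : Fin q × Fin q // p.1 ≤ p.2 }

/-- Half-vectorization: stacks the entries of `A` on and below the diagonal column by column. -/
def vech {R : Type*} {q : ℕ} (A : Matrix (Fin q) (Fin q) R) : VechIdx q → R :=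
  fun p => A p.1.2 p.1.1

/-- The duplication matrix `𝒟_q`: the unique `q² × (q(q+1)/2)` matrix with
`𝒟_q · vech A = vec A` for every symmetric `q × q` matrix `A`. -/
def dup (q : ℕ) : Matrix (Fin q × Fin q) (VechIdx q) ℝ := fun v w =>
  if (v.1 = w.1.1 ∧ v.2 = w.1.2) ∨ (v.1 = w.1.2 ∧ v.2 = w.1.1) then 1 else 0

/-- The commutation matrix `K_{q,q}`: the unique `q² × q²` matrix with
`K_{q,q} · vec A = vec Aᵀ` for every `q × q` matrix `A`. -/
def commMat (q : ℕ) : Matrix (Fin q × Fin q) (Fin q × Fin q) ℝ := fun a b =>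
  if a.1 = b.2 ∧ a.2 = b.1 then 1 else 0

/-- The symmetrization matrix `N_q = (1/2)(I_{q²} + K_{q,q})`. -/
noncomputable def Nmat (q : ℕ) : Matrix (Fin q × Fin q) (Fin q × Fin q) ℝ :=
  (1 / 2 : ℝ) • (1 + commMat q)

/-- The unique symmetric matrix whose half-vectorization is `v`. -/
def unvech {q : ℕ} (v : VechIdx q → ℝ) : Matrix (Fin q) (Fin q) ℝ := fun i j =>
  if h : j ≤ i then v ⟨(j, i), h⟩ else v ⟨(i, j), (le_total j i).resolve_left h⟩

attribute [local instance] Matrix.linftyOpNormedRing Matrix.linftyOpNormedAlgebra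

lemma unvech_add {q : ℕ} (a b : VechIdx q → ℝ) : unvech (a + b) = unvech a + unvech b := by
  funext i j; by_cases h : j ≤ i <;> simp [unvech, h, Matrix.add_apply]

lemma unvech_smul {q : ℕ} (c : ℝ) (a : VechIdx q → ℝ) : unvech (c • a) = c • unvech a := by
  funext i j; by_cases h : j ≤ i <;> simp [unvech, h, Matrix.smul_apply]

lemma unvech_vech {q : ℕ} (A : Matrix (Fin q) (Fin q) ℝ) (hA : A.IsSymm) :
    unvech (vech A) = A := by
  funext i j; unfold unvech vech
  split
  · rfl
  · exact hA.apply i j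

lemma unvech_single {q : ℕ} (w : VechIdx q) (a b : Fin q) :
    unvech (Pi.single w 1) a b = dup q (a, b) w := by
  obtain ⟨⟨c, d⟩, hcd⟩ := w
  simp only [unvech, dup, Pi.single_apply, Subtype.mk.injEq, Prod.mk.injEq]
  have hcd' : (c : ℕ) ≤ d := hcd
  split_ifs <;>
    first
      | rfl
      | (exfalso; simp only [Fin.ext_iff, Fin.le_def, not_and, not_or, not_le] at *; omega)

lemma dup_swap {q : ℕ} (a b : Fin q) (w : VechIdx q) :
    dup q (b, a) w = dup q (a, b) w := by
  simp only [dup]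
  exact if_congr (by tauto) rfl rfl

noncomputable def sandwichL {n q m : ℕ} (Zs : Fin m → Matrix (Fin n) (Fin q) ℝ) :
    (VechIdx q → ℝ) →L[ℝ] Matrix (Fin n) (Fin n) ℝ :=
  LinearMap.toContinuousLinearMap
    { toFun := fun v => ∑ j, Zs j * unvech v * (Zs j)ᵀ
      map_add' := by
        intro a b
        simp [unvech_add, Matrix.mul_add, Matrix.add_mul, Finset.sum_add_distrib]
      map_smul' := by
        intro c a
        simp [unvech_smul, Matrix.mul_smul, Matrix.smul_mul, Finset.smul_sum] }

@[simp] lemma sandwichL_apply {n q m : ℕ} (Zs : Fin m → Matrix (Fin n) (Fin q) ℝ)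
    (v : VechIdx q → ℝ) : sandwichL Zs v = ∑ j, Zs j * unvech v * (Zs j)ᵀ := rfl

noncomputable def conjL {n p : ℕ} (X : Matrix (Fin n) (Fin p) ℝ) :
    Matrix (Fin n) (Fin n) ℝ →L[ℝ] Matrix (Fin p) (Fin p) ℝ :=
  LinearMap.toContinuousLinearMap
    { toFun := fun W => Xᵀ * W * X
      map_add' := by intro a b; simp [Matrix.mul_add, Matrix.add_mul]
      map_smul' := by intro c a; simp [Matrix.mul_smul, Matrix.smul_mul] }

@[simp] lemma conjL_apply {n p : ℕ} (X : Matrix (Fin n) (Fin p) ℝ)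
    (W : Matrix (Fin n) (Fin n) ℝ) : conjL X W = Xᵀ * W * X := rfl

noncomputable def evalL {p : ℕ} (σ : ℝ) (L : Matrix (Fin 1) (Fin p) ℝ) :
    Matrix (Fin p) (Fin p) ℝ →L[ℝ] ℝ :=
  LinearMap.toContinuousLinearMap
    { toFun := fun W => σ ^ 2 * (L * W * Lᵀ) 0 0
      map_add' := by intro a b; simp [Matrix.mul_add, Matrix.add_mul, Matrix.add_apply]; ring
      map_smul' := by intro c a; simp [Matrix.mul_smul, Matrix.smul_mul, Matrix.smul_apply]; ring }

@[simp] lemma evalL_apply {p : ℕ} (σ : ℝ) (L : Matrix (Fin 1) (Fin p) ℝ)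
    (W : Matrix (Fin p) (Fin p) ℝ) : evalL σ L W = σ ^ 2 * (L * W * Lᵀ) 0 0 := rfl

set_option maxHeartbeats 2000000 in
/-- The function `S²(v) = σ² L (Xᵀ V⁻¹ X)⁻¹ Lᵀ`, regarded as a function of
`vech(D_k)` (with `D_k` the unique symmetric matrix having the given half-vectorization, all
other quantities fixed), is differentiable at `vech(D_k)` and its gradient there equals
`σ² 𝒟_{q_k}ᵀ ( ∑_j B_{(k,j)} ⊗ B_{(k,j)} )` where
`B_{(k,j)} = Z_{(k,j)}ᵀ V⁻¹ X (Xᵀ V⁻¹ X)⁻¹ Lᵀ`. -/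
theorem stmt11 (n p r : ℕ) (hn : 0 < n) (hp : 0 < p) (σ : ℝ) (hσ : 0 < σ)
    (X : Matrix (Fin n) (Fin p) ℝ) (L : Matrix (Fin 1) (Fin p) ℝ)
    (l q : Fin r → ℕ)
    (Z : (k : Fin r) → Fin (l k) → Matrix (Fin n) (Fin (q k)) ℝ)
    (D : (k : Fin r) → Matrix (Fin (q k)) (Fin (q k)) ℝ)
    (hDsymm : ∀ k', (D k').IsSymm)
    (k : Fin r)
    (V : Matrix (Fin n) (Fin n) ℝ)
    (hV : V = 1 + ∑ k', ∑ j, Z k' j * D k' * (Z k' j)ᵀ)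
    (hVpd : V.PosDef)
    (hXVX : IsUnit (Xᵀ * V⁻¹ * X).det)
    (B : Fin (l k) → Matrix (Fin (q k)) (Fin 1) ℝ)
    (hB : ∀ j, B j = (Z k j)ᵀ * V⁻¹ * X * (Xᵀ * V⁻¹ * X)⁻¹ * Lᵀ)
    (S2 : (VechIdx (q k) → ℝ) → ℝ)
    -- `S2 v` is `σ² L (Xᵀ V(v)⁻¹ X)⁻¹ Lᵀ` with `D_k` replaced by the unique symmetric matrix
    -- whose half-vectorization is `v`
    (hS2 : S2 = fun v =>
      σ ^ 2 * (L * (Xᵀ * (1 + ∑ k', ∑ j,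
        Z k' j * Function.update D k (unvech v) k' * (Z k' j)ᵀ)⁻¹ * X)⁻¹ * Lᵀ) 0 0) :
    DifferentiableAt ℝ S2 (vech (D k)) ∧
    ∀ w : VechIdx (q k),
      fderiv ℝ S2 (vech (D k)) (Pi.single w 1) =
        (σ ^ 2 • (dup (q k))ᵀ.mulVec
          (fun idx => (∑ j, kroneckerMap (· * ·) (B j) (B j)) idx (0, 0))) w := by
  classical
  have hVt : Vᵀ = V := by
    rw [hV, Matrix.transpose_add, Matrix.transpose_one, Matrix.transpose_sum]
    congr 1
    refine Finset.sum_congr rfl fun k' _ => ?_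
    rw [Matrix.transpose_sum]
    refine Finset.sum_congr rfl fun j _ => ?_
    rw [Matrix.transpose_mul, Matrix.transpose_mul, Matrix.transpose_transpose,
      (hDsymm k').eq, Matrix.mul_assoc]
  have hVunit : IsUnit V :=
    (Matrix.isUnit_iff_isUnit_det V).2 (isUnit_iff_ne_zero.2 hVpd.det_pos.ne')
  set M : Matrix (Fin p) (Fin p) ℝ := Xᵀ * V⁻¹ * X with hM
  have hMunit : IsUnit M := (Matrix.isUnit_iff_isUnit_det M).2 hXVX
  have hVit : (V⁻¹)ᵀ = V⁻¹ := by rw [Matrix.transpose_nonsing_inv, hVt]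
  have hMt : Mᵀ = M := by
    rw [hM, Matrix.transpose_mul, Matrix.transpose_mul, Matrix.transpose_transpose, hVit,
      Matrix.mul_assoc]
  have hMit : (M⁻¹)ᵀ = M⁻¹ := by rw [Matrix.transpose_nonsing_inv, hMt]
  set v₀ := vech (D k) with hv₀
  have hunv : unvech v₀ = D k := unvech_vech _ (hDsymm k)
  set Vf : (VechIdx (q k) → ℝ) → Matrix (Fin n) (Fin n) ℝ := fun v =>
    1 + ∑ k', ∑ j, Z k' j * Function.update D k (unvech v) k' * (Z k' j)ᵀ with hVf
  have hVf0 : Vf v₀ = V := by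
    rw [hVf]
    simp only [hunv, Function.update_eq_self]
    exact hV.symm
  set Vc : Matrix (Fin n) (Fin n) ℝ :=
    1 + ∑ k' ∈ Finset.univ.erase k, ∑ j, Z k' j * D k' * (Z k' j)ᵀ with hVc
  have hVfeq : ∀ v, Vf v = Vc + sandwichL (Z k) v := by
    intro v
    rw [hVf, hVc]
    dsimp only
    rw [← Finset.sum_erase_add _ _ (Finset.mem_univ k)]
    rw [Finset.sum_congr rfl (fun k' hk' => by
      rw [Function.update_of_ne (Finset.ne_of_mem_erase hk')])]
    simp only [Function.update_self, sandwichL_apply]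
    abel
  have hdVf : HasFDerivAt Vf (sandwichL (Z k)) v₀ := by
    have h : Vf = fun v => Vc + sandwichL (Z k) v := funext hVfeq
    rw [h]
    exact ((sandwichL (Z k)).hasFDerivAt (x := v₀)).const_add Vc
  have hdiV : HasFDerivAt (fun v => Ring.inverse (Vf v))
      ((-(ContinuousLinearMap.mulLeftRight ℝ _ V⁻¹ V⁻¹)).comp (sandwichL (Z k))) v₀ := by
    have h1 := hasFDerivAt_ringInverse (𝕜 := ℝ) hVunit.unit
    have h2 : ((hVunit.unit⁻¹ : _) : Matrix (Fin n) (Fin n) ℝ) = V⁻¹ := by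
      rw [Matrix.coe_units_inv, hVunit.unit_spec]
    rw [hVunit.unit_spec, h2] at h1
    have h1' : HasFDerivAt (Ring.inverse : Matrix (Fin n) (Fin n) ℝ → _)
        (-(ContinuousLinearMap.mulLeftRight ℝ _ V⁻¹ V⁻¹)) (Vf v₀) := by
      rw [hVf0]; exact h1
    exact h1'.comp v₀ hdVf
  have hdM : HasFDerivAt (fun v => Xᵀ * Ring.inverse (Vf v) * X)
      ((conjL X).comp
        ((-(ContinuousLinearMap.mulLeftRight ℝ _ V⁻¹ V⁻¹)).comp (sandwichL (Z k)))) v₀ :=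
    (conjL X).hasFDerivAt.comp v₀ hdiV
  have hM0 : Xᵀ * Ring.inverse (Vf v₀) * X = M := by
    rw [hVf0, ← Matrix.nonsing_inv_eq_ringInverse]
  set Dtot : (VechIdx (q k) → ℝ) →L[ℝ] ℝ :=
    (evalL σ L).comp
      ((-(ContinuousLinearMap.mulLeftRight ℝ _ M⁻¹ M⁻¹)).comp
        ((conjL X).comp
          ((-(ContinuousLinearMap.mulLeftRight ℝ _ V⁻¹ V⁻¹)).comp (sandwichL (Z k))))) with hDtot
  have hdS : HasFDerivAt S2 Dtot v₀ := by
    have hdiM : HasFDerivAt (fun v => Ring.inverse (Xᵀ * Ring.inverse (Vf v) * X))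
        ((-(ContinuousLinearMap.mulLeftRight ℝ _ M⁻¹ M⁻¹)).comp
          ((conjL X).comp
            ((-(ContinuousLinearMap.mulLeftRight ℝ _ V⁻¹ V⁻¹)).comp (sandwichL (Z k))))) v₀ := by
      have h1 := hasFDerivAt_ringInverse (𝕜 := ℝ) hMunit.unit
      have h2 : ((hMunit.unit⁻¹ : _) : Matrix (Fin p) (Fin p) ℝ) = M⁻¹ := by
        rw [Matrix.coe_units_inv, hMunit.unit_spec]
      rw [hMunit.unit_spec, h2] at h1
      have h1' : HasFDerivAt (Ring.inverse : Matrix (Fin p) (Fin p) ℝ → _)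
          (-(ContinuousLinearMap.mulLeftRight ℝ _ M⁻¹ M⁻¹)) (Xᵀ * Ring.inverse (Vf v₀) * X) := by
        rw [hM0]; exact h1
      exact h1'.comp v₀ hdM
    have hS2' : S2 = fun v => evalL σ L (Ring.inverse (Xᵀ * Ring.inverse (Vf v) * X)) := by
      rw [hS2]
      funext v
      rw [evalL_apply, ← Matrix.nonsing_inv_eq_ringInverse, ← Matrix.nonsing_inv_eq_ringInverse]
    rw [hS2', hDtot]
    exact (evalL σ L).hasFDerivAt.comp v₀ hdiM
  refine ⟨hdS.differentiableAt, fun w => ?_⟩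
  rw [hdS.fderiv]
  have key : ∀ E : Matrix (Fin (q k)) (Fin (q k)) ℝ,
      L * (M⁻¹ * (Xᵀ * (V⁻¹ * (∑ j, Z k j * E * (Z k j)ᵀ) * V⁻¹) * X) * M⁻¹) * Lᵀ
        = ∑ j, (B j)ᵀ * E * B j := by
    intro E
    simp only [Matrix.mul_sum, Matrix.sum_mul]
    refine Finset.sum_congr rfl fun j _ => ?_
    rw [hB j]
    simp [Matrix.transpose_mul, Matrix.mul_assoc, hMit, hVit]
  have hDval : Dtot (Pi.single w 1) =
      σ ^ 2 * ((∑ j, (B j)ᵀ * unvech (Pi.single w 1) * B j) 0 0) := by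
    rw [hDtot]
    change σ ^ 2 * (L * -(M⁻¹ * (Xᵀ * -(V⁻¹ * (∑ j, Z k j * unvech (Pi.single w 1) * (Z k j)ᵀ)
      * V⁻¹) * X) * M⁻¹) * Lᵀ) 0 0 = _
    simp only [
      Matrix.neg_mul, Matrix.mul_neg, neg_neg]
    rw [← key (unvech (Pi.single w 1))]
  rw [hDval]
  simp only [Matrix.sum_apply, Matrix.mul_apply, Matrix.transpose_apply, Pi.smul_apply,
    smul_eq_mul, Matrix.mulVec, dotProduct, Finset.sum_apply, kroneckerMap_apply,
    Fintype.sum_prod_type, unvech_single, Finset.sum_mul, Finset.mul_sum]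
  rw [Finset.sum_comm]
  refine Finset.sum_congr rfl fun a _ => ?_
  rw [Finset.sum_comm]
  refine Finset.sum_congr rfl fun b _ => ?_
  refine Finset.sum_congr rfl fun j _ => ?_
  rw [dup_swap]
  ring
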